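/- Let α be the real root of x^3 - x - 1 = 0 and let b ≥ 2 be an integer. Then log b / log α is irrational. -/

import Mathlib

lemma rat_cubic_int (r : ℚ) (c1 c0 : ℤ) (h : r ^ 3 = c1 * r + c0) :
    ∃ n : ℤ, (r : ℚ) = n ∧ n ^ 3 = c1 * n + c0 := by
  have hd0 : ((r.den : ℚ)) ≠ 0 := by exact_mod_cast r.den_ne_zero
  have key : (r.num : ℚ) ^ 3 = c1 * r.num * (r.den : ℚ) ^ 2 + c0 * (r.den : ℚ) ^ 3 := by
    have hr : (r : ℚ) = (r.num : ℚ) / (r.den : ℚ) := (Rat.num_div_den r).symm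
    rw [hr] at h
    field_simp at h
    apply mul_right_cancel₀ hd0
    rw [h]; ring
  have keyZ : r.num ^ 3 = c1 * r.num * (r.den : ℤ) ^ 2 + c0 * (r.den : ℤ) ^ 3 := by
    exact_mod_cast key
  have hdvd : (r.den : ℤ) ∣ r.num ^ 3 :=
    ⟨c1 * r.num * (r.den : ℤ) + c0 * (r.den : ℤ) ^ 2, by linarith [keyZ]⟩
  have hcop : IsCoprime (r.num ^ 3) (r.den : ℤ) := by
    apply IsCoprime.pow_left
    rw [Int.isCoprime_iff_gcd_eq_one]
    exact r.reduced
  obtain ⟨u, v, huv⟩ := hcop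
  have hone : (r.den : ℤ) ∣ 1 := by
    rw [← huv]
    exact dvd_add (Dvd.dvd.mul_left hdvd u) (Dvd.dvd.mul_left dvd_rfl v)
  have hden : r.den = 1 := by
    have := Int.isUnit_iff.mp (isUnit_of_dvd_one hone)
    omega
  refine ⟨r.num, ?_, ?_⟩
  · rw [← Rat.num_div_den r, hden]; simp
  · have hD : ((r.den : ℤ)) = 1 := by exact_mod_cast hden
    rw [hD] at keyZ; linarith [keyZ]

lemma alpha_irrational (α : ℝ) (hroot : α ^ 3 = α + 1) (hα : 1 < α) : Irrational α := by
  rintro ⟨r, hr⟩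
  have hq : r ^ 3 = r + 1 := by
    have : (r : ℝ) ^ 3 = (r : ℝ) + 1 := by rw [hr]; exact hroot
    exact_mod_cast this
  have h : r ^ 3 = ((1 : ℤ) : ℚ) * r + ((1 : ℤ) : ℚ) := by push_cast; linarith
  obtain ⟨n, hn, heq⟩ := rat_cubic_int r 1 1 h
  have hr1 : (1 : ℚ) < r := by
    have : (1 : ℝ) < (r : ℝ) := by rw [hr]; exact hα
    exact_mod_cast this
  have hn2 : 2 ≤ n := by
    have h1 : (1 : ℚ) < (n : ℚ) := by rw [← hn]; exact hr1
    have h2 : (1 : ℤ) < n := by exact_mod_cast h1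
    omega
  have e1 : 2 * n ≤ n ^ 2 := by nlinarith
  have e2 : 2 * n ^ 2 ≤ n ^ 3 := by nlinarith
  linarith

lemma lin_indep (α : ℝ) (hroot : α ^ 3 = α + 1) (hα : 1 < α) (x y z : ℚ)
    (h : (x : ℝ) + (y : ℝ) * α + (z : ℝ) * α ^ 2 = 0) : x = 0 ∧ y = 0 ∧ z = 0 := by
  have hirr := alpha_irrational α hroot hα
  by_cases hz : z = 0
  · subst hz
    by_cases hy : y = 0
    · subst hy
      simp at h
      exact ⟨by exact_mod_cast h, rfl, rfl⟩
    · exfalso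
      apply hirr
      refine ⟨-x / y, ?_⟩
      have hy' : ((y : ℝ)) ≠ 0 := by exact_mod_cast hy
      push_cast
      rw [div_eq_iff hy']
      simp at h
      linear_combination -h
  · exfalso
    have hz' : ((z : ℝ)) ≠ 0 := by exact_mod_cast hz
    set A : ℚ := -x / z with hAdef
    set B : ℚ := -y / z with hBdef
    have hA : α ^ 2 = (A : ℝ) + (B : ℝ) * α := by
      rw [hAdef, hBdef]
      push_cast
      field_simp
      linear_combination h
    have hcube : ((A * B : ℚ) : ℝ) + ((A + B ^ 2 : ℚ) : ℝ) * α = α + 1 := by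
      push_cast
      linear_combination hroot - (α + (B : ℝ)) * hA
    by_cases hAB : A + B ^ 2 = 1
    · have hAB' : ((A + B ^ 2 : ℚ) : ℝ) = 1 := by exact_mod_cast hAB
      rw [hAB'] at hcube
      have hABval : ((A * B : ℚ) : ℝ) = 1 := by linarith
      have hAB1 : A * B = 1 := by exact_mod_cast hABval
      have hBcube : B ^ 3 = ((1 : ℤ) : ℚ) * B + ((-1 : ℤ) : ℚ) := by
        push_cast
        linear_combination B * hAB - hAB1
      obtain ⟨n, hn, heq⟩ := rat_cubic_int B 1 (-1) hBcube
      have hcases : n ≤ -2 ∨ n = -1 ∨ n = 0 ∨ 1 ≤ n := by omega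
      rcases hcases with h1 | h1 | h1 | h1
      · nlinarith [heq, sq_nonneg (n + 2), sq_nonneg (n + 1)]
      · subst h1; norm_num at heq
      · subst h1; norm_num at heq
      · have e1 : 1 ≤ n ^ 2 := by nlinarith
        have e2 : n ≤ n ^ 3 := by nlinarith
        linarith
    · apply hirr
      refine ⟨(1 - A * B) / (A + B ^ 2 - 1), ?_⟩
      have hD : (A + B ^ 2 - 1 : ℚ) ≠ 0 := by intro hc; apply hAB; linarith
      have hD' : ((A : ℝ) + (B : ℝ) ^ 2 - 1) ≠ 0 := by
        intro hc; apply hD; exact_mod_cast hc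
      push_cast
      rw [div_eq_iff hD']
      push_cast at hcube
      linear_combination -hcube

/-- Coefficients of α^k in the basis (1, α, α²) for the plastic number. -/
def plasticCoeff : ℕ → ℕ × ℕ × ℕ
  | 0 => (1, 0, 0)
  | k + 1 =>
      ((plasticCoeff k).2.2, (plasticCoeff k).1 + (plasticCoeff k).2.2, (plasticCoeff k).2.1)

lemma plasticCoeff_spec (α : ℝ) (hroot : α ^ 3 = α + 1) (k : ℕ) :
    α ^ k = ((plasticCoeff k).1 : ℝ) + ((plasticCoeff k).2.1 : ℝ) * α
      + ((plasticCoeff k).2.2 : ℝ) * α ^ 2 := by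
  induction k with
  | zero => simp [plasticCoeff]
  | succ k ih =>
      show α ^ (k + 1) = _
      simp only [plasticCoeff]
      push_cast
      linear_combination α * ih + ((plasticCoeff k).2.2 : ℝ) * hroot

lemma plasticCoeff_pos (k : ℕ) (hk : 1 ≤ k) :
    1 ≤ (plasticCoeff k).2.1 + (plasticCoeff k).2.2 := by
  induction k with
  | zero => omega
  | succ k ih =>
      rcases Nat.eq_zero_or_pos k with rfl | hk'
      · simp [plasticCoeff]
      · have := ih hk'
        simp only [plasticCoeff]
        omega

theorem irrational_log_ratio_plastic (α : ℝ) (hroot : α ^ 3 = α + 1) (hα : 1 < α)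
    (b : ℕ) (hb : 2 ≤ b) :
    Irrational (Real.log b / Real.log α) := by
  rintro ⟨q, hq⟩
  have hlogα : 0 < Real.log α := Real.log_pos hα
  have hb1 : (1 : ℝ) < (b : ℝ) := by
    have : (2 : ℝ) ≤ (b : ℝ) := by exact_mod_cast hb
    linarith
  have hlogb : 0 < Real.log b := Real.log_pos hb1
  have hq' : (q : ℝ) * Real.log α = Real.log b := by
    rw [hq]
    field_simp
  have hqpos : 0 < q := by
    have : (0 : ℝ) < (q : ℝ) := by rw [hq]; positivity
    exact_mod_cast this
  set p : ℕ := q.num.toNat with hpdef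
  have hpz : ((p : ℤ)) = q.num := Int.toNat_of_nonneg (le_of_lt (Rat.num_pos.mpr hqpos))
  have hp1 : 1 ≤ p := by
    have := Rat.num_pos.mpr hqpos
    omega
  set d : ℕ := q.den with hddef
  have hd0 : (d : ℝ) ≠ 0 := by
    have := q.den_ne_zero
    positivity
  have hqr : (q : ℝ) = (p : ℝ) / (d : ℝ) := by
    rw [Rat.cast_def]
    congr 1
    exact_mod_cast hpz.symm
  have hkey : (p : ℝ) * Real.log α = (d : ℝ) * Real.log b := by
    rw [hqr] at hq'
    field_simp at hq'
    linarith
  have hlogeq : Real.log (α ^ p) = Real.log ((b : ℝ) ^ d) := by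
    rw [Real.log_pow, Real.log_pow]
    linarith
  have hαpos : (0 : ℝ) < α := by linarith
  have hαb : α ^ p = (b : ℝ) ^ d := by
    have := congrArg Real.exp hlogeq
    rwa [Real.exp_log (by positivity), Real.exp_log (by positivity)] at this
  have hspec := plasticCoeff_spec α hroot p
  obtain ⟨hx, hy, hz⟩ := lin_indep α hroot hα
    (((plasticCoeff p).1 : ℚ) - ((b ^ d : ℕ) : ℚ))
    ((plasticCoeff p).2.1 : ℚ) ((plasticCoeff p).2.2 : ℚ)
    (by push_cast; linarith)
  have hy' : (plasticCoeff p).2.1 = 0 := by exact_mod_cast hy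
  have hz' : (plasticCoeff p).2.2 = 0 := by exact_mod_cast hz
  have := plasticCoeff_pos p hp1
  omega
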